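/- Let Σ be a fan in a finite-dimensional ℚ-vector space V having at most two maximal cones (i.e., there exist cones σ₁, σ₂ ∈ Σ such that every cone of Σ is contained in σ₁ or in σ₂). Then Σ is quasi-projective. -/

import Mathlib

open Pointwise

/-- The cone generated by a finite family of vectors: all nonnegative
rational linear combinations of the `g i`. -/
def coneGen {V : Type*} [AddCommGroup V] [Module ℚ V] {n : ℕ} (g : Fin n → V) : Set V :=
  {x | ∃ c : Fin n → ℚ, (∀ i, 0 ≤ c i) ∧ x = ∑ i, c i • g i}

/-- A set is a cone if it is the cone generated by some finite family of vectors. -/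
def IsCone {V : Type*} [AddCommGroup V] [Module ℚ V] (C : Set V) : Prop :=
  ∃ (n : ℕ) (g : Fin n → V), C = coneGen g

/-- `F` is a face of the cone `C` if `F = C ∩ l⁻¹(0)` for some linear form `l`
nonnegative on `C`. -/
def IsFaceOf {V : Type*} [AddCommGroup V] [Module ℚ V] (F C : Set V) : Prop :=
  ∃ l : V →ₗ[ℚ] ℚ, (∀ x ∈ C, 0 ≤ l x) ∧ F = C ∩ {x | l x = 0}

/-- A fan: a finite collection of strictly convex cones, closed under taking faces,
such that the intersection of any two of its cones is a face of each. -/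
def IsFan {V : Type*} [AddCommGroup V] [Module ℚ V] (S : Set (Set V)) : Prop :=
  S.Finite ∧
  (∀ C ∈ S, IsCone C ∧ C ∩ (-C) = ({0} : Set V)) ∧
  (∀ C ∈ S, ∀ F : Set V, IsFaceOf F C → F ∈ S) ∧
  (∀ C ∈ S, ∀ C' ∈ S, IsFaceOf (C ∩ C') C ∧ IsFaceOf (C ∩ C') C')

/-- A cone of the collection `S` is maximal if it is not strictly contained in
another cone of `S`. -/
def IsMaximalIn {V : Type*} [AddCommGroup V] [Module ℚ V] (S : Set (Set V)) (C : Set V) : Prop :=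
  C ∈ S ∧ ∀ C' ∈ S, C ⊆ C' → C' = C

/-- A fan is quasi-projective if there is a family of linear forms indexed by its
maximal cones which agree on pairwise intersections and satisfy the strict
inequality condition. -/
def IsQuasiProjectiveFan {V : Type*} [AddCommGroup V] [Module ℚ V] (S : Set (Set V)) : Prop :=
  ∃ l : Set V → (V →ₗ[ℚ] ℚ),
    (∀ C, IsMaximalIn S C → ∀ C', IsMaximalIn S C' → ∀ x ∈ C ∩ C', l C x = l C' x) ∧
    (∀ C, IsMaximalIn S C → ∀ C', IsMaximalIn S C' → C ≠ C' →
      ∀ x ∈ C, x ∉ C' → l C' x < l C x)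

section Aux
variable {V : Type*} [AddCommGroup V] [Module ℚ V]

lemma coneGen_zero_mem {n : ℕ} (g : Fin n → V) : (0:V) ∈ coneGen g :=
  ⟨0, fun _ => le_refl 0, by simp⟩

lemma coneGen_gen_mem {n : ℕ} (g : Fin n → V) (i : Fin n) : g i ∈ coneGen g := by
  classical
  refine ⟨fun j => if j = i then 1 else 0, ?_, ?_⟩
  · intro j; dsimp only; split <;> norm_num
  · simp [ite_smul]

lemma coneGen_add_mem {n : ℕ} {g : Fin n → V} {x y : V} (hx : x ∈ coneGen g)
    (hy : y ∈ coneGen g) : x + y ∈ coneGen g := by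
  obtain ⟨c, hc, rfl⟩ := hx; obtain ⟨d, hd, rfl⟩ := hy
  exact ⟨c + d, fun i => add_nonneg (hc i) (hd i), by
    simp [add_smul, Finset.sum_add_distrib]⟩

lemma coneGen_smul_mem {n : ℕ} {g : Fin n → V} {x : V} {a : ℚ} (ha : 0 ≤ a)
    (hx : x ∈ coneGen g) : a • x ∈ coneGen g := by
  obtain ⟨c, hc, rfl⟩ := hx
  exact ⟨fun i => a * c i, fun i => mul_nonneg ha (hc i), by
    simp [Finset.smul_sum, mul_smul]⟩

lemma coneGen_sum_mem {n : ℕ} {g : Fin n → V} {m : ℕ} (p : Fin m → V)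
    (hp : ∀ i, p i ∈ coneGen g) : (∑ i, p i) ∈ coneGen g := by
  classical
  induction m with
  | zero => simpa using coneGen_zero_mem g
  | succ m ih =>
      rw [Fin.sum_univ_castSucc]
      exact coneGen_add_mem (ih _ (fun i => hp i.castSucc)) (hp (Fin.last m))

lemma coneGen_apply_nonneg {n : ℕ} {g : Fin n → V} (f : V →ₗ[ℚ] ℚ)
    (hf : ∀ i, 0 ≤ f (g i)) {x : V} (hx : x ∈ coneGen g) : 0 ≤ f x := by
  obtain ⟨c, hc, rfl⟩ := hx
  simp only [map_sum, map_smul, smul_eq_mul]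
  exact Finset.sum_nonneg fun i _ => mul_nonneg (hc i) (hf i)

lemma exists_neg_dual {w : V} (hw : w ≠ 0) : ∃ f : V →ₗ[ℚ] ℚ, f w < 0 := by
  have h : ¬ ∀ φ : Module.Dual ℚ V, φ w = 0 := by
    rw [Module.forall_dual_apply_eq_zero_iff ℚ w]; exact hw
  push_neg at h
  obtain ⟨f, hf⟩ := h
  rcases lt_or_gt_of_ne hf with h | h
  · exact ⟨f, h⟩
  · exact ⟨-f, by simpa using h⟩

theorem farkas : ∀ {n : ℕ} (g : Fin n → V) {w : V}, w ∉ coneGen g →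
    ∃ f : V →ₗ[ℚ] ℚ, (∀ i, 0 ≤ f (g i)) ∧ f w < 0 := by
  intro n
  induction n with
  | zero =>
      intro g w hw
      have hw0 : w ≠ 0 := by rintro rfl; exact hw (coneGen_zero_mem g)
      obtain ⟨f, hf⟩ := exists_neg_dual hw0
      exact ⟨f, fun i => i.elim0, hf⟩
  | succ n ih =>
      intro g w hw
      set g' : Fin n → V := fun i => g i.castSucc with hg'
      set u : V := g (Fin.last n) with hu'
      have hsub : coneGen g' ⊆ coneGen g := by
        rintro x ⟨c, hc, rfl⟩
        refine ⟨Fin.snoc c 0, ?_, ?_⟩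
        · intro i
          refine Fin.lastCases ?_ ?_ i
          · simp
          · intro i; simpa using hc i
        · rw [Fin.sum_univ_castSucc]
          simp [hg']
      have hw' : w ∉ coneGen g' := fun hmem => hw (hsub hmem)
      obtain ⟨f, hfg, hfw⟩ := ih g' hw'
      by_cases hu : 0 ≤ f u
      · refine ⟨f, ?_, hfw⟩
        intro i
        refine Fin.lastCases hu (fun i => hfg i) i
      · push_neg at hu
        have hlam0 : 0 < -(f u) := by linarith
        set lam : ℚ := -(f u) with hlam
        set g'' : Fin n → V := fun i => lam • g' i + (f (g' i)) • u with hg''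
        set w' : V := lam • w + (f w) • u with hw'def
        have hnmem : w' ∉ coneGen g'' := by
          rintro ⟨c, hc, hsum⟩
          apply hw
          have key : lam • w = ∑ i : Fin n, (c i * lam) • g' i
              + ((∑ i : Fin n, c i * f (g' i)) - f w) • u := by
            have : lam • w = w' - (f w) • u := by rw [hw'def]; abel
            rw [this, hsum]
            simp only [hg'', smul_add, smul_smul, sub_smul, Finset.sum_add_distrib,
              Finset.sum_smul]
            abel
          have hmem : lam • w ∈ coneGen g := by
            refine ⟨Fin.snoc (fun i => c i * lam) ((∑ i : Fin n, c i * f (g' i)) - f w), ?_, ?_⟩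
            · intro i
              refine Fin.lastCases ?_ ?_ i
              · simp only [Fin.snoc_last]
                have h1 : 0 ≤ ∑ i : Fin n, c i * f (g' i) :=
                  Finset.sum_nonneg fun i _ => mul_nonneg (hc i) (hfg i)
                linarith
              · intro i; simp only [Fin.snoc_castSucc]
                exact mul_nonneg (hc i) (le_of_lt hlam0)
            · rw [Fin.sum_univ_castSucc]
              simpa [hg'] using key
          have := coneGen_smul_mem (a := lam⁻¹) (by positivity) hmem
          rwa [inv_smul_smul₀ (ne_of_gt hlam0)] at this
        obtain ⟨k, hkg, hkw⟩ := ih g'' hnmem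
        refine ⟨lam • k + (k u) • f, ?_, ?_⟩
        · intro i
          refine Fin.lastCases ?_ ?_ i
          · simp only [LinearMap.add_apply, LinearMap.smul_apply, smul_eq_mul, ← hu']
            have hz : lam * k u + k u * f u = 0 := by rw [hlam]; ring
            linarith
          · intro i
            have := hkg i
            simp only [hg'', map_add, map_smul, smul_eq_mul] at this
            simp only [LinearMap.add_apply, LinearMap.smul_apply, smul_eq_mul, hg']
            linarith [this]
        · have := hkw
          simp only [hw'def, map_add, map_smul, smul_eq_mul] at this
          simp only [LinearMap.add_apply, LinearMap.smul_apply, smul_eq_mul]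
          linarith [this]

theorem separation {m n : ℕ} (g : Fin m → V) (h : Fin n → V) (l₁ l₂ : V →ₗ[ℚ] ℚ)
    (hl₁ : ∀ x ∈ coneGen g, 0 ≤ l₁ x)
    (hτ₁ : coneGen g ∩ coneGen h = coneGen g ∩ {x | l₁ x = 0})
    (hl₂ : ∀ x ∈ coneGen h, 0 ≤ l₂ x)
    (hτ₂ : coneGen g ∩ coneGen h = coneGen h ∩ {x | l₂ x = 0}) :
    ∃ f : V →ₗ[ℚ] ℚ, (∀ x ∈ coneGen g ∩ coneGen h, f x = 0) ∧
      (∀ x ∈ coneGen g, x ∉ coneGen h → 0 < f x) ∧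
      (∀ x ∈ coneGen h, x ∉ coneGen g → f x < 0) := by
  classical
  set u : Fin (m + n) → V := Fin.append g (fun j => -h j) with hu
  set D : (V →ₗ[ℚ] ℚ) → Prop := fun f => (∀ i, 0 ≤ f (g i)) ∧ (∀ j, f (h j) ≤ 0) with hD
  have hDiff : ∀ f : V →ₗ[ℚ] ℚ, (∀ k, 0 ≤ f (u k)) ↔ D f := by
    intro f
    constructor
    · intro hk
      refine ⟨fun i => ?_, fun j => ?_⟩
      · have := hk (Fin.castAdd n i); rwa [hu, Fin.append_left] at this
      · have := hk (Fin.natAdd m j); rw [hu, Fin.append_right] at this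
        simp only [map_neg] at this; linarith
    · intro hf k
      refine Fin.addCases (fun i => ?_) (fun j => ?_) k
      · rw [hu, Fin.append_left]; exact hf.1 i
      · rw [hu, Fin.append_right]; simp only [map_neg]; linarith [hf.2 j]
  have hdecomp : ∀ x ∈ coneGen u, ∃ A ∈ coneGen g, ∃ B ∈ coneGen h, x = A - B := by
    rintro x ⟨c, hc, rfl⟩
    refine ⟨∑ i, c (Fin.castAdd n i) • g i, ⟨_, fun i => hc _, rfl⟩,
      ∑ j, c (Fin.natAdd m j) • h j, ⟨_, fun j => hc _, rfl⟩, ?_⟩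
    rw [Fin.sum_univ_add]
    simp only [hu, Fin.append_left, Fin.append_right, smul_neg, sub_eq_add_neg,
      ← Finset.sum_neg_distrib]
  set F1 : Fin m → (V →ₗ[ℚ] ℚ) := fun i =>
    if hi : ∃ f, D f ∧ 0 < f (g i) then hi.choose else 0 with hF1
  set F2 : Fin n → (V →ₗ[ℚ] ℚ) := fun j =>
    if hj : ∃ f, D f ∧ f (h j) < 0 then hj.choose else 0 with hF2
  have hD0 : D 0 := ⟨fun i => le_refl 0, fun j => le_refl 0⟩
  have hDadd : ∀ f f', D f → D f' → D (f + f') := by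
    rintro f f' ⟨h1, h2⟩ ⟨h1', h2'⟩
    exact ⟨fun i => by simpa using add_nonneg (h1 i) (h1' i),
      fun j => by simpa using add_nonpos (h2 j) (h2' j)⟩
  have hF1D : ∀ i, D (F1 i) := by
    intro i; rw [hF1]; dsimp only
    split
    · next hi => exact hi.choose_spec.1
    · exact hD0
  have hF2D : ∀ j, D (F2 j) := by
    intro j; rw [hF2]; dsimp only
    split
    · next hj => exact hj.choose_spec.1
    · exact hD0
  have hDsum : ∀ {k : ℕ} (p : Fin k → (V →ₗ[ℚ] ℚ)), (∀ i, D (p i)) → D (∑ i, p i) := by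
    intro k
    induction k with
    | zero => intro p hp; simpa using hD0
    | succ k ih =>
        intro p hp
        rw [Fin.sum_univ_castSucc]
        exact hDadd _ _ (ih _ fun i => hp i.castSucc) (hp (Fin.last k))
  set f₀ : V →ₗ[ℚ] ℚ := (∑ i, F1 i) + (∑ j, F2 j) with hf₀
  have hf₀D : D f₀ := hDadd _ _ (hDsum F1 hF1D) (hDsum F2 hF2D)
  have hmax1 : ∀ i, f₀ (g i) = 0 → ∀ f, D f → f (g i) = 0 := by
    intro i h0 f hf
    by_contra hne
    have hex : ∃ f, D f ∧ 0 < f (g i) := ⟨f, hf, lt_of_le_of_ne (hf.1 i) (Ne.symm hne)⟩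
    have hF1i : 0 < (F1 i) (g i) := by
      rw [hF1]; dsimp only; rw [dif_pos hex]; exact hex.choose_spec.2
    have h1 : (F1 i) (g i) ≤ (∑ i', F1 i') (g i) := by
      rw [LinearMap.sum_apply]
      exact Finset.single_le_sum (fun i' _ => (hF1D i').1 i) (Finset.mem_univ i)
    have h2 : (0:ℚ) ≤ (∑ j, F2 j) (g i) := by
      rw [LinearMap.sum_apply]
      exact Finset.sum_nonneg fun j _ => (hF2D j).1 i
    have hpos : 0 < f₀ (g i) := by
      rw [hf₀, LinearMap.add_apply]; linarith
    rw [h0] at hpos; exact lt_irrefl 0 hpos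
  have hmax2 : ∀ j, f₀ (h j) = 0 → ∀ f, D f → f (h j) = 0 := by
    intro j h0 f hf
    by_contra hne
    have hex : ∃ f, D f ∧ f (h j) < 0 := ⟨f, hf, lt_of_le_of_ne (hf.2 j) hne⟩
    have hF2j : (F2 j) (h j) < 0 := by
      rw [hF2]; dsimp only; rw [dif_pos hex]; exact hex.choose_spec.2
    have h1 : (∑ j', F2 j') (h j) ≤ (F2 j) (h j) := by
      rw [LinearMap.sum_apply]
      have hge := Finset.single_le_sum (f := fun j' => -((F2 j') (h j)))
        (fun j' _ => neg_nonneg.2 ((hF2D j').2 j)) (Finset.mem_univ j)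
      simp only [Finset.sum_neg_distrib] at hge
      linarith
    have h2 : (∑ i, F1 i) (h j) ≤ 0 := by
      rw [LinearMap.sum_apply]
      exact Finset.sum_nonpos fun i _ => (hF1D i).2 j
    have hneg : f₀ (h j) < 0 := by
      rw [hf₀, LinearMap.add_apply]; linarith
    rw [h0] at hneg; exact lt_irrefl 0 hneg
  have hf₀g : ∀ x ∈ coneGen g, 0 ≤ f₀ x := fun x hx => coneGen_apply_nonneg f₀ hf₀D.1 hx
  have hf₀h : ∀ x ∈ coneGen h, f₀ x ≤ 0 := by
    intro x hx
    have := coneGen_apply_nonneg (-f₀) (fun j => by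
      simp only [LinearMap.neg_apply]; linarith [hf₀D.2 j]) hx
    simp only [LinearMap.neg_apply] at this; linarith
  refine ⟨f₀, ?_, ?_, ?_⟩
  · intro x hx; exact le_antisymm (hf₀h x hx.2) (hf₀g x hx.1)
  · intro x hxg hxh
    rcases lt_or_eq_of_le (hf₀g x hxg) with hlt | heq
    · exact hlt
    exfalso
    apply hxh
    obtain ⟨c, hc, rfl⟩ := hxg
    have hsum0 : ∑ i, c i * f₀ (g i) = 0 := by
      have hfs : f₀ (∑ i, c i • g i) = ∑ i, c i * f₀ (g i) := by
        rw [map_sum]; simp only [map_smul, smul_eq_mul]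
      rw [← hfs]; exact heq.symm
    have hterms := (Finset.sum_eq_zero_iff_of_nonneg
      (fun i _ => mul_nonneg (hc i) (hf₀D.1 i))).1 hsum0
    refine coneGen_sum_mem (fun i => c i • g i) (fun i => ?_)
    by_cases hci : c i = 0
    · rw [hci, zero_smul]; exact coneGen_zero_mem h
    · have hf0gi : f₀ (g i) = 0 := by
        have := hterms i (Finset.mem_univ i)
        exact (mul_eq_zero.1 this).resolve_left hci
      have hall := hmax1 i hf0gi
      have hmemu : -(g i) ∈ coneGen u := by
        by_contra hn
        obtain ⟨f, hfk, hfneg⟩ := farkas u hn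
        have := hall f ((hDiff f).1 hfk)
        rw [map_neg, this, neg_zero] at hfneg
        exact lt_irrefl 0 hfneg
      obtain ⟨A, hA, B, hB, hAB⟩ := hdecomp _ hmemu
      have hB' : B = A + g i := by
        have : A - B = -(g i) := hAB.symm
        rw [sub_eq_iff_eq_add] at this
        rw [this]; abel
      have hBg : B ∈ coneGen g := hB' ▸ coneGen_add_mem hA (coneGen_gen_mem g i)
      have hBτ : B ∈ coneGen g ∩ coneGen h := ⟨hBg, hB⟩
      have hl₁B : l₁ B = 0 := by
        rw [hτ₁] at hBτ; exact hBτ.2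
      have hl₁gi : l₁ (g i) = 0 := by
        have h1 : (0:ℚ) ≤ l₁ A := hl₁ A hA
        have h2 : (0:ℚ) ≤ l₁ (g i) := hl₁ _ (coneGen_gen_mem g i)
        have h3 : l₁ B = l₁ A + l₁ (g i) := by rw [hB', map_add]
        linarith
      have hgi : g i ∈ coneGen g ∩ coneGen h := by
        rw [hτ₁]; exact ⟨coneGen_gen_mem g i, hl₁gi⟩
      exact coneGen_smul_mem (hc i) hgi.2
  · intro x hxh hxg
    rcases lt_or_eq_of_le (hf₀h x hxh) with hlt | heq
    · exact hlt
    exfalso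
    apply hxg
    obtain ⟨c, hc, rfl⟩ := hxh
    have hsum0 : ∑ j, -(c j * f₀ (h j)) = 0 := by
      have hfs : f₀ (∑ j, c j • h j) = ∑ j, c j * f₀ (h j) := by
        rw [map_sum]; simp only [map_smul, smul_eq_mul]
      rw [Finset.sum_neg_distrib, ← hfs, heq, neg_zero]
    have hterms := (Finset.sum_eq_zero_iff_of_nonneg
      (fun j _ => by simpa using mul_nonpos_of_nonneg_of_nonpos (hc j) (hf₀D.2 j))).1 hsum0
    refine coneGen_sum_mem (fun j => c j • h j) (fun j => ?_)
    by_cases hcj : c j = 0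
    · rw [hcj, zero_smul]; exact coneGen_zero_mem g
    · have hf0hj : f₀ (h j) = 0 := by
        have := hterms j (Finset.mem_univ j)
        have := neg_eq_zero.1 this
        exact (mul_eq_zero.1 this).resolve_left hcj
      have hall := hmax2 j hf0hj
      have hmemu : h j ∈ coneGen u := by
        by_contra hn
        obtain ⟨f, hfk, hfneg⟩ := farkas u hn
        have := hall f ((hDiff f).1 hfk)
        rw [this] at hfneg
        exact lt_irrefl 0 hfneg
      obtain ⟨A, hA, B, hB, hAB⟩ := hdecomp _ hmemu
      have hA' : A = h j + B := by rw [hAB]; abel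
      have hAh : A ∈ coneGen h := hA' ▸ coneGen_add_mem (coneGen_gen_mem h j) hB
      have hAτ : A ∈ coneGen g ∩ coneGen h := ⟨hA, hAh⟩
      have hl₂A : l₂ A = 0 := by
        rw [hτ₂] at hAτ; exact hAτ.2
      have hl₂hj : l₂ (h j) = 0 := by
        have h1 : (0:ℚ) ≤ l₂ B := hl₂ B hB
        have h2 : (0:ℚ) ≤ l₂ (h j) := hl₂ _ (coneGen_gen_mem h j)
        have h3 : l₂ A = l₂ (h j) + l₂ B := by rw [hA', map_add]
        linarith
      have hhj : h j ∈ coneGen g ∩ coneGen h := by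
        rw [hτ₂]; exact ⟨coneGen_gen_mem h j, hl₂hj⟩
      exact coneGen_smul_mem (hc j) hhj.1

end Aux


/-- A fan with at most two maximal cones (i.e. admitting two
of its cones containing all the others) is quasi-projective. -/
theorem fan_with_two_maximal_cones_quasiProjective
    {V : Type*} [AddCommGroup V] [Module ℚ V] [FiniteDimensional ℚ V]
    (S : Set (Set V)) (hS : IsFan S)
    (h : ∃ σ₁ ∈ S, ∃ σ₂ ∈ S, ∀ C ∈ S, C ⊆ σ₁ ∨ C ⊆ σ₂) :
    IsQuasiProjectiveFan S := by
  classical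
  obtain ⟨σ₁, hσ₁, σ₂, hσ₂, hcover⟩ := h
  obtain ⟨hfin, hcone, hface, hinter⟩ := hS
  have hmax : ∀ C, IsMaximalIn S C → C = σ₁ ∨ C = σ₂ := by
    rintro C ⟨hCS, hCmax⟩
    rcases hcover C hCS with h1 | h2
    · exact Or.inl (hCmax σ₁ hσ₁ h1).symm
    · exact Or.inr (hCmax σ₂ hσ₂ h2).symm
  by_cases hdis : ∃ C₁ C₂, IsMaximalIn S C₁ ∧ IsMaximalIn S C₂ ∧ C₁ ≠ C₂
  · obtain ⟨C₁, C₂, hm1, hm2, hne⟩ := hdis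
    have h12 : ∀ C, IsMaximalIn S C → C = C₁ ∨ C = C₂ := by
      intro C hC
      rcases hmax C hC with rfl | rfl <;> rcases hmax C₁ hm1 with h1 | h1 <;>
        rcases hmax C₂ hm2 with h2 | h2 <;>
        first
          | tauto
          | exact absurd (h1.trans h2.symm) hne
    obtain ⟨n1, g, hg⟩ := (hcone C₁ hm1.1).1
    obtain ⟨n2, gh, hh⟩ := (hcone C₂ hm2.1).1
    obtain ⟨hfc1, hfc2⟩ := hinter C₁ hm1.1 C₂ hm2.1
    obtain ⟨l₁, hl₁, hτ₁⟩ := hfc1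
    obtain ⟨l₂, hl₂, hτ₂⟩ := hfc2
    subst hg; subst hh
    obtain ⟨f, hf0, hfpos, hfneg⟩ := separation g gh l₁ l₂ hl₁ hτ₁ hl₂ hτ₂
    refine ⟨fun C => if C = coneGen g then f else 0, ?_, ?_⟩
    · intro C hC C' hC' x hx
      rcases h12 C hC with rfl | rfl <;> rcases h12 C' hC' with rfl | rfl
      · rfl
      · dsimp only
        rw [if_pos rfl, if_neg (Ne.symm hne)]
        simpa using hf0 x hx
      · dsimp only
        rw [if_neg (Ne.symm hne), if_pos rfl]
        simpa using (hf0 x ⟨hx.2, hx.1⟩).symm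
      · rfl
    · intro C hC C' hC' hne' x hxC hxC'
      rcases h12 C hC with rfl | rfl <;> rcases h12 C' hC' with rfl | rfl
      · exact absurd rfl hne'
      · dsimp only
        rw [if_pos rfl, if_neg (Ne.symm hne)]
        simpa using hfpos x hxC hxC'
      · dsimp only
        rw [if_neg (Ne.symm hne), if_pos rfl]
        simpa using hfneg x hxC hxC'
      · exact absurd rfl hne'
  · push_neg at hdis
    refine ⟨fun _ => 0, ?_, ?_⟩
    · intro C hC C' hC' x hx; rfl
    · intro C hC C' hC' hne x hxC hxC'
      exact absurd (hdis C C' hC hC') hne
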